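/- arXiv:1406.4363 — 2 statements merged into one kernel-verified Lean document; each statement's English description precedes it below -/
import Mathlib

section
/- Suppose a function f(w, α) : ℝ^d × ℝ^m → ℝ is convex in w and concave in α, and there exist constants C > 0 and D > 0 such that for all feasible pairs (w,α),(w',α') we have ‖w−w'‖² + ‖α−α'‖² ≤ D, and for all t = 1,…,T and all feasible (w,α): ‖w^{t+1}−w‖² + ‖α^{t+1}−α‖² ≤ ‖w^t−w‖² + ‖α^t−α‖² − 2η_t(f(w^t,α) − f(w,α^t)) + Cη_t². Then with step sizes η_t = √(D/(2Ct)) the averaged iterates (w̃^T, α̃^T) = ((1/T)Σ_t w^t, (1/T)Σ_t α^t) satisfy max_{α'} f(w̃^T, α') − min_{w'} f(w', α̃^T) ≤ √(2DC/T). -/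
open scoped BigOperators

set_option maxHeartbeats 1000000

lemma sum_inv_sqrt (T : ℕ) : ∑ t ∈ Finset.Icc 1 T, (Real.sqrt t)⁻¹ ≤ 2 * Real.sqrt T := by
  induction T with
  | zero => simp
  | succ n ih =>
    rw [Finset.sum_Icc_succ_top (Nat.one_le_iff_ne_zero.mpr (Nat.succ_ne_zero n))]
    have h1 : Real.sqrt n ≤ Real.sqrt (n+1) := by
      apply Real.sqrt_le_sqrt; linarith
    have h2 : (0:ℝ) < Real.sqrt (n+1) := by
      apply Real.sqrt_pos.mpr; positivity
    have key : (Real.sqrt ((n:ℝ)+1))⁻¹ ≤ 2 * (Real.sqrt (n+1) - Real.sqrt n) := by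
      have hs : Real.sqrt ((n:ℝ)+1) * Real.sqrt ((n:ℝ)+1) = (n:ℝ)+1 :=
        Real.mul_self_sqrt (by positivity)
      have hs2 : Real.sqrt (n:ℝ) * Real.sqrt (n:ℝ) = (n:ℝ) :=
        Real.mul_self_sqrt (by positivity)
      rw [inv_le_iff_one_le_mul₀ h2]
      nlinarith [sq_nonneg (Real.sqrt ((n:ℝ)+1) - Real.sqrt (n:ℝ)), hs, hs2]
    push_cast
    linarith

lemma abel_bound (r b : ℕ → ℝ) (D : ℝ) (T : ℕ) (hT : 1 ≤ T)
    (hr0 : ∀ t, 0 ≤ r t) (hrD : ∀ t, r t ≤ D)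
    (hb0 : ∀ t, 1 ≤ t → 0 ≤ b t) (hbmono : ∀ t, 1 ≤ t → b t ≤ b (t+1)) :
    ∑ t ∈ Finset.Icc 1 T, (r t - r (t+1)) * b t ≤ (D - r (T+1)) * b T := by
  induction T, hT using Nat.le_induction with
  | base =>
    simp only [Finset.Icc_self, Finset.sum_singleton]
    nlinarith [hr0 2, hrD 1, hb0 1 le_rfl]
  | succ n hn ih =>
    rw [Finset.sum_Icc_succ_top (by omega : 1 ≤ n + 1)]
    have h1 := hbmono n hn
    have := hrD (n+1)
    have := hb0 n hn
    nlinarith [hr0 (n+1)]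

/-- Convergence lemma: under the boundedness and descent-inequality assumptions,
with step sizes `η_t = √(D/(2Ct))`, the duality gap of the averaged iterates
after `T` epochs is at most `√(2DC/T)`. -/
theorem stmt_4 (d m T : ℕ) (hT : 1 ≤ T)
    (f : EuclideanSpace ℝ (Fin d) → EuclideanSpace ℝ (Fin m) → ℝ)
    (W : Set (EuclideanSpace ℝ (Fin d))) (A : Set (EuclideanSpace ℝ (Fin m)))
    (hWc : Convex ℝ W) (hAc : Convex ℝ A)
    (hconv : ∀ a ∈ A, ConvexOn ℝ W (fun w => f w a))
    (hconc : ∀ w ∈ W, ConcaveOn ℝ A (fun a => f w a))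
    (C D : ℝ) (hC : 0 < C) (hD : 0 < D)
    (wseq : ℕ → EuclideanSpace ℝ (Fin d)) (aseq : ℕ → EuclideanSpace ℝ (Fin m))
    (hmem : ∀ t, wseq t ∈ W ∧ aseq t ∈ A)
    (hdiam : ∀ w ∈ W, ∀ w' ∈ W, ∀ a ∈ A, ∀ a' ∈ A,
      ‖w - w'‖ ^ 2 + ‖a - a'‖ ^ 2 ≤ D)
    (η : ℕ → ℝ) (hη : ∀ t : ℕ, η t = Real.sqrt (D / (2 * C * t)))
    (hstep : ∀ t : ℕ, 1 ≤ t → t ≤ T → ∀ w ∈ W, ∀ a ∈ A,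
      ‖wseq (t + 1) - w‖ ^ 2 + ‖aseq (t + 1) - a‖ ^ 2
        ≤ ‖wseq t - w‖ ^ 2 + ‖aseq t - a‖ ^ 2
          - 2 * η t * (f (wseq t) a - f w (aseq t)) + C * η t ^ 2) :
    sSup ((fun a => f ((T : ℝ)⁻¹ • ∑ t ∈ Finset.Icc 1 T, wseq t) a) '' A)
      - sInf ((fun w => f w ((T : ℝ)⁻¹ • ∑ t ∈ Finset.Icc 1 T, aseq t)) '' W)
      ≤ Real.sqrt (2 * D * C / T) := by
  have hTpos : (0:ℝ) < T := by exact_mod_cast hT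
  set E := Real.sqrt (D / (2 * C)) with hEdef
  have hDC : (0:ℝ) < D / (2 * C) := by positivity
  have hE : 0 < E := Real.sqrt_pos.mpr hDC
  set S := Real.sqrt (2 * D * C) with hSdef
  have hS : 0 < S := Real.sqrt_pos.mpr (by positivity)
  -- key scalar identities
  have fact1 : D = S * E := by
    rw [hSdef, hEdef, ← Real.sqrt_mul (by positivity)]
    rw [show (2 * D * C) * (D / (2 * C)) = D ^ 2 by field_simp]
    exact (Real.sqrt_sq hD.le).symm
  have fact2 : 2 * C * E = S := by
    rw [hEdef, hSdef]
    rw [show (2 * C : ℝ) = Real.sqrt ((2 * C) ^ 2) from (Real.sqrt_sq (by positivity)).symm]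
    rw [← Real.sqrt_mul (by positivity)]
    congr 1
    rw [Real.sqrt_sq (show (0:ℝ) ≤ 2 * C by positivity)]
    field_simp
  have hηE : ∀ t : ℕ, η t = E * (Real.sqrt t)⁻¹ := by
    intro t
    rw [hη, ← div_div, Real.sqrt_div hDC.le, div_eq_mul_inv]
  have hηpos : ∀ t : ℕ, 1 ≤ t → 0 < η t := by
    intro t ht
    rw [hηE]
    have : (0:ℝ) < t := by exact_mod_cast ht
    positivity
  -- averaged iterates
  have hcard : (Finset.Icc 1 T).card = T := by rw [Nat.card_Icc]; omega
  have hwt : ∀ i ∈ Finset.Icc 1 T, (0:ℝ) ≤ (T:ℝ)⁻¹ := fun i _ => by positivity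
  have hwsum : ∑ _i ∈ Finset.Icc 1 T, (T:ℝ)⁻¹ = 1 := by
    rw [Finset.sum_const, hcard, nsmul_eq_mul]
    field_simp
  have hsmul1 : (T:ℝ)⁻¹ • ∑ t ∈ Finset.Icc 1 T, wseq t
      = ∑ t ∈ Finset.Icc 1 T, (T:ℝ)⁻¹ • wseq t := Finset.smul_sum
  have hsmul2 : (T:ℝ)⁻¹ • ∑ t ∈ Finset.Icc 1 T, aseq t
      = ∑ t ∈ Finset.Icc 1 T, (T:ℝ)⁻¹ • aseq t := Finset.smul_sum
  have hwbar : (T:ℝ)⁻¹ • ∑ t ∈ Finset.Icc 1 T, wseq t ∈ W := by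
    rw [hsmul1]
    exact hWc.sum_mem hwt hwsum (fun i _ => (hmem i).1)
  have habar : (T:ℝ)⁻¹ • ∑ t ∈ Finset.Icc 1 T, aseq t ∈ A := by
    rw [hsmul2]
    exact hAc.sum_mem hwt hwsum (fun i _ => (hmem i).2)
  -- pointwise duality gap bound
  have hpoint : ∀ w ∈ W, ∀ a ∈ A,
      f ((T:ℝ)⁻¹ • ∑ t ∈ Finset.Icc 1 T, wseq t) a
        - f w ((T:ℝ)⁻¹ • ∑ t ∈ Finset.Icc 1 T, aseq t)
        ≤ Real.sqrt (2 * D * C / T) := by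
    intro w hw a ha
    set r : ℕ → ℝ := fun t => ‖wseq t - w‖ ^ 2 + ‖aseq t - a‖ ^ 2 with hrdef
    set g : ℕ → ℝ := fun t => f (wseq t) a - f w (aseq t) with hgdef
    set b : ℕ → ℝ := fun t => (2 * η t)⁻¹ with hbdef
    have hbE : ∀ t : ℕ, b t = (2 * E)⁻¹ * Real.sqrt t := by
      intro t
      rw [hbdef]
      simp only [hηE t]
      rw [show (2 * (E * (Real.sqrt t)⁻¹)) = (2 * E) * (Real.sqrt t)⁻¹ by ring,
        mul_inv, inv_inv]
    -- per-step bound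
    have hper : ∀ t ∈ Finset.Icc 1 T, g t ≤ (r t - r (t+1)) * b t + C / 2 * η t := by
      intro t ht
      rw [Finset.mem_Icc] at ht
      have hη1 := hηpos t ht.1
      have h := hstep t ht.1 ht.2 w hw a ha
      have h2 : 2 * η t * g t ≤ r t - r (t+1) + C * η t ^ 2 := by
        simp only [hrdef, hgdef]; linarith
      calc g t = (2 * η t * g t) * (2 * η t)⁻¹ := by field_simp
        _ ≤ (r t - r (t+1) + C * η t ^ 2) * (2 * η t)⁻¹ :=
            mul_le_mul_of_nonneg_right h2 (by positivity)
        _ = (r t - r (t+1)) * b t + C / 2 * η t := by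
            rw [hbdef]; field_simp
    have hsum1 : ∑ t ∈ Finset.Icc 1 T, g t
        ≤ ∑ t ∈ Finset.Icc 1 T, ((r t - r (t+1)) * b t + C / 2 * η t) :=
      Finset.sum_le_sum hper
    -- telescoping part
    have hr0 : ∀ t, 0 ≤ r t := fun t => by positivity
    have hrD : ∀ t, r t ≤ D := fun t =>
      hdiam (wseq t) (hmem t).1 w hw (aseq t) (hmem t).2 a ha
    have hb0 : ∀ t, 1 ≤ t → 0 ≤ b t := fun t _ => by
      rw [hbE]; positivity
    have hbmono : ∀ t, 1 ≤ t → b t ≤ b (t+1) := by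
      intro t _
      rw [hbE, hbE]
      have : Real.sqrt t ≤ Real.sqrt (t+1) := by
        apply Real.sqrt_le_sqrt; push_cast; linarith
      have h2E : (0:ℝ) ≤ (2*E)⁻¹ := by positivity
      push_cast
      nlinarith
    have htel : ∑ t ∈ Finset.Icc 1 T, (r t - r (t+1)) * b t ≤ D * b T := by
      calc ∑ t ∈ Finset.Icc 1 T, (r t - r (t+1)) * b t
          ≤ (D - r (T+1)) * b T := abel_bound r b D T hT hr0 hrD hb0 hbmono
        _ ≤ D * b T := by nlinarith [hr0 (T+1), hb0 T hT]
    -- step size sum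
    have hηsum : ∑ t ∈ Finset.Icc 1 T, (C / 2 * η t) ≤ S / 2 * Real.sqrt T := by
      have : ∑ t ∈ Finset.Icc 1 T, (C / 2 * η t)
          = C / 2 * E * ∑ t ∈ Finset.Icc 1 T, (Real.sqrt t)⁻¹ := by
        rw [Finset.mul_sum]
        exact Finset.sum_congr rfl fun t _ => by rw [hηE]; ring
      rw [this]
      calc C / 2 * E * ∑ t ∈ Finset.Icc 1 T, (Real.sqrt t)⁻¹
          ≤ C / 2 * E * (2 * Real.sqrt T) :=
            mul_le_mul_of_nonneg_left (sum_inv_sqrt T) (by positivity)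
        _ = S / 2 * Real.sqrt T := by rw [← fact2]; ring
    have hDbT : D * b T = S / 2 * Real.sqrt T := by
      rw [hbE, fact1]; field_simp
    have hsumg : ∑ t ∈ Finset.Icc 1 T, g t ≤ S * Real.sqrt T := by
      rw [Finset.sum_add_distrib] at hsum1
      calc ∑ t ∈ Finset.Icc 1 T, g t
          ≤ D * b T + S / 2 * Real.sqrt T := by linarith [htel, hηsum]
        _ = S * Real.sqrt T := by rw [hDbT]; ring
    -- Jensen
    have hJ1 : f ((T:ℝ)⁻¹ • ∑ t ∈ Finset.Icc 1 T, wseq t) a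
        ≤ ∑ t ∈ Finset.Icc 1 T, (T:ℝ)⁻¹ * f (wseq t) a := by
      rw [hsmul1]
      have := (hconv a ha).map_sum_le hwt hwsum (fun i _ => (hmem i).1)
      simpa using this
    have hJ2 : ∑ t ∈ Finset.Icc 1 T, (T:ℝ)⁻¹ * f w (aseq t)
        ≤ f w ((T:ℝ)⁻¹ • ∑ t ∈ Finset.Icc 1 T, aseq t) := by
      rw [hsmul2]
      have := (hconc w hw).le_map_sum hwt hwsum (fun i _ => (hmem i).2)
      simpa using this
    have hgap : f ((T:ℝ)⁻¹ • ∑ t ∈ Finset.Icc 1 T, wseq t) a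
        - f w ((T:ℝ)⁻¹ • ∑ t ∈ Finset.Icc 1 T, aseq t)
        ≤ (T:ℝ)⁻¹ * ∑ t ∈ Finset.Icc 1 T, g t := by
      have : (T:ℝ)⁻¹ * ∑ t ∈ Finset.Icc 1 T, g t
          = ∑ t ∈ Finset.Icc 1 T, (T:ℝ)⁻¹ * f (wseq t) a
            - ∑ t ∈ Finset.Icc 1 T, (T:ℝ)⁻¹ * f w (aseq t) := by
        rw [Finset.mul_sum, ← Finset.sum_sub_distrib]
        exact Finset.sum_congr rfl fun t _ => by rw [hgdef]; ring
      rw [this]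
      linarith
    have hfin : (T:ℝ)⁻¹ * (S * Real.sqrt T) = Real.sqrt (2 * D * C / T) := by
      rw [Real.sqrt_div (by positivity) , ← hSdef]
      have hsT : Real.sqrt T * Real.sqrt T = (T:ℝ) := Real.mul_self_sqrt hTpos.le
      have hsTpos : (0:ℝ) < Real.sqrt T := Real.sqrt_pos.mpr hTpos
      field_simp
      nlinarith [hsT]
    calc f ((T:ℝ)⁻¹ • ∑ t ∈ Finset.Icc 1 T, wseq t) a
        - f w ((T:ℝ)⁻¹ • ∑ t ∈ Finset.Icc 1 T, aseq t)
        ≤ (T:ℝ)⁻¹ * ∑ t ∈ Finset.Icc 1 T, g t := hgap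
      _ ≤ (T:ℝ)⁻¹ * (S * Real.sqrt T) :=
          mul_le_mul_of_nonneg_left hsumg (by positivity)
      _ = Real.sqrt (2 * D * C / T) := hfin
  -- from pointwise bound to sSup/sInf
  have hAne : ((fun a => f ((T:ℝ)⁻¹ • ∑ t ∈ Finset.Icc 1 T, wseq t) a) '' A).Nonempty :=
    ⟨_, Set.mem_image_of_mem _ (hmem 1).2⟩
  have hWne : ((fun w => f w ((T:ℝ)⁻¹ • ∑ t ∈ Finset.Icc 1 T, aseq t)) '' W).Nonempty :=
    ⟨_, Set.mem_image_of_mem _ (hmem 1).1⟩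
  have hsup : sSup ((fun a => f ((T:ℝ)⁻¹ • ∑ t ∈ Finset.Icc 1 T, wseq t) a) '' A)
      ≤ sInf ((fun w => f w ((T:ℝ)⁻¹ • ∑ t ∈ Finset.Icc 1 T, aseq t)) '' W)
        + Real.sqrt (2 * D * C / T) := by
    apply csSup_le hAne
    rintro x ⟨a, ha, rfl⟩
    have hinf : f ((T:ℝ)⁻¹ • ∑ t ∈ Finset.Icc 1 T, wseq t) a - Real.sqrt (2 * D * C / T)
        ≤ sInf ((fun w => f w ((T:ℝ)⁻¹ • ∑ t ∈ Finset.Icc 1 T, aseq t)) '' W) := by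
      apply le_csInf hWne
      rintro y ⟨w, hw, rfl⟩
      linarith [hpoint w hw a ha]
    linarith
  linarith
end

section
/- Consider the recursion w_k = (1 − (λ/n)η) w_{k−1} + (η/m) α_{k−1} x_k applied n times starting from w_0 = w, where |α_{k−1}| ≤ c for all k and 0 < λη < 1. Then |w_n − w| ≤ (1 − (1 − (λ/n)η)^n)|w| + cη v, where v = (1/m) Σ_{k=1}^n |x_k|. -/
/-- Bound on the drift of a coordinate of `w` under `n` steps of the
incremental gradient recursion with bounded `α` values. -/
theorem stmt_9 (n : ℕ) (hn : 1 ≤ n) (m lam eta c : ℝ)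
    (hm : 0 < m) (hlam : 0 < lam) (heta : 0 < eta) (hle : lam * eta < 1)
    (w : ℕ → ℝ) (a : ℕ → ℝ) (x : ℕ → ℝ)
    (ha : ∀ k, |a k| ≤ c)
    (hrec : ∀ k ∈ Finset.Icc 1 n,
      w k = (1 - lam * eta / n) * w (k - 1) + (eta / m) * a (k - 1) * x k) :
    |w n - w 0|
      ≤ (1 - (1 - lam * eta / n) ^ n) * |w 0|
        + c * eta * ((1 / m) * ∑ k ∈ Finset.Icc 1 n, |x k|) := by
  have hn' : (1:ℝ) ≤ n := by exact_mod_cast hn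
  have hc : 0 ≤ c := le_trans (abs_nonneg _) (ha 0)
  set r := 1 - lam * eta / n with hrdef
  have hdiv : lam * eta / n ≤ lam * eta :=
    div_le_self (le_of_lt (mul_pos hlam heta)) hn'
  have hr0 : 0 ≤ r := by simp only [hrdef]; linarith
  have hr1 : r ≤ 1 := by
    have : 0 ≤ lam * eta / n := by positivity
    simp only [hrdef]; linarith
  have key : ∀ k, k ≤ n →
      |w k - r ^ k * w 0| ≤ c * (eta / m) * ∑ j ∈ Finset.Icc 1 k, |x j| := by
    intro k
    induction k with
    | zero => intro _; simp
    | succ k ih =>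
      intro hk
      have ihk := ih (Nat.le_of_succ_le hk)
      have hrec' := hrec (k+1) (Finset.mem_Icc.mpr ⟨Nat.le_add_left 1 k, hk⟩)
      simp only [Nat.add_sub_cancel] at hrec'
      have e : w (k+1) - r ^ (k+1) * w 0
          = r * (w k - r ^ k * w 0) + (eta / m) * a k * x (k+1) := by
        rw [hrec', hrdef]; ring
      have hxk : 0 ≤ |x (k+1)| := abs_nonneg _
      calc |w (k+1) - r ^ (k+1) * w 0|
          ≤ r * |w k - r ^ k * w 0| + |(eta / m) * a k * x (k+1)| := by
            rw [e]
            refine (abs_add_le _ _).trans ?_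
            rw [abs_mul, abs_of_nonneg hr0]
        _ ≤ c * (eta / m) * (∑ j ∈ Finset.Icc 1 k, |x j|) + c * (eta / m) * |x (k+1)| := by
            have h1 : r * |w k - r ^ k * w 0| ≤ c * (eta / m) * ∑ j ∈ Finset.Icc 1 k, |x j| := by
              calc r * |w k - r ^ k * w 0| ≤ 1 * |w k - r ^ k * w 0| := by
                    exact mul_le_mul_of_nonneg_right hr1 (abs_nonneg _)
                _ = |w k - r ^ k * w 0| := one_mul _
                _ ≤ _ := ihk
            have h2 : |(eta / m) * a k * x (k+1)| ≤ c * (eta / m) * |x (k+1)| := by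
              rw [abs_mul, abs_mul, abs_of_nonneg (le_of_lt (div_pos heta hm))]
              have := ha k
              calc eta / m * |a k| * |x (k+1)| ≤ eta / m * c * |x (k+1)| := by
                    apply mul_le_mul_of_nonneg_right _ hxk
                    exact mul_le_mul_of_nonneg_left this (le_of_lt (div_pos heta hm))
                _ = c * (eta / m) * |x (k+1)| := by ring
            linarith
        _ = c * (eta / m) * ∑ j ∈ Finset.Icc 1 (k+1), |x j| := by
            rw [Finset.sum_Icc_succ_top (Nat.le_add_left 1 k)]; ring
  have hkey := key n le_rfl
  have hrn1 : r ^ n ≤ 1 := pow_le_one₀ hr0 hr1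
  have hrn0 : 0 ≤ r ^ n := pow_nonneg hr0 n
  have htri : |w n - w 0| ≤ |w n - r ^ n * w 0| + |r ^ n * w 0 - w 0| := by
    have := abs_add_le (w n - r ^ n * w 0) (r ^ n * w 0 - w 0)
    simpa using this
  have h2 : |r ^ n * w 0 - w 0| = (1 - r ^ n) * |w 0| := by
    have : r ^ n * w 0 - w 0 = -((1 - r ^ n) * w 0) := by ring
    rw [this, abs_neg, abs_mul, abs_of_nonneg (by linarith)]
  have heq : c * (eta / m) * (∑ j ∈ Finset.Icc 1 n, |x j|)
      = c * eta * ((1 / m) * ∑ k ∈ Finset.Icc 1 n, |x k|) := by ring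
  rw [hrdef] at hkey h2 ⊢
  linarith [hkey, htri, h2]
end
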